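/- (KL bound for product Bernoulli likelihoods.) Let ι be a finite index set and a, b : ι → ℝ. Let P_a be the product measure ⊗_{i ∈ ι} Bernoulli(p_{a(i)}) and P_b = ⊗_{i ∈ ι} Bernoulli(p_{b(i)}). Then D_KL(P_a ‖ P_b) ≤ Σ_{i ∈ ι} (a(i) − b(i))². -/

import Mathlib

open MeasureTheory

/-- The logistic function `x ↦ 1/(1 + e^{−x})`. -/
noncomputable def logistic (x : ℝ) : ℝ := 1 / (1 + Real.exp (-x))

lemma logistic_le_one (x : ℝ) : logistic x ≤ 1 := by
  rw [logistic, div_le_one (by positivity)]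
  linarith [Real.exp_pos (-x)]

/-- The Bernoulli measure on `{0,1}` (identified with `Bool`) with success probability
`1/(1 + e^{−x})`. -/
noncomputable def bernoulliLogit (x : ℝ) : Measure Bool :=
  (PMF.bernoulli (Real.toNNReal (logistic x))
    (Real.toNNReal_le_one.mpr (logistic_le_one x))).toMeasure

instance (x : ℝ) : IsProbabilityMeasure (bernoulliLogit x) := by
  unfold bernoulliLogit; infer_instance

lemma logistic_pos (x : ℝ) : 0 < logistic x := by unfold logistic; positivity

lemma logistic_lt_one (x : ℝ) : logistic x < 1 := by
  rw [logistic, div_lt_one (by positivity)]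
  linarith [Real.exp_pos (-x)]

lemma bernoulliLogit_singleton (x : ℝ) (t : Bool) :
    bernoulliLogit x {t} = ENNReal.ofReal (if t then logistic x else 1 - logistic x) := by
  rw [bernoulliLogit, PMF.toMeasure_apply_singleton _ _ (measurableSet_singleton t),
    PMF.bernoulli_apply]
  cases t
  · show (1 : ENNReal) - ENNReal.ofReal (logistic x) = _
    rw [← ENNReal.ofReal_one, ← ENNReal.ofReal_sub _ (logistic_pos x).le]
    simp
  · exact rfl

lemma one_add_exp_pos (x : ℝ) : (0:ℝ) < 1 + Real.exp x := by positivity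

lemma hasDerivAt_logistic (x : ℝ) :
    HasDerivAt logistic (Real.exp (-x) / (1 + Real.exp (-x)) ^ 2) x := by
  have h : HasDerivAt (fun x : ℝ => 1 + Real.exp (-x)) (-Real.exp (-x)) x := by
    simpa using (Real.hasDerivAt_exp (-x)).comp x (hasDerivAt_neg x) |>.const_add 1
  have := h.inv (by positivity)
  simp only [neg_neg, neg_div] at this
  have hl : logistic = fun x : ℝ => (1 + Real.exp (-x))⁻¹ := by funext t; simp [logistic, one_div]
  rw [hl]
  simpa [Pi.inv_def] using this

lemma logistic_lipschitz (x y : ℝ) : |logistic x - logistic y| ≤ (1/4) * |x - y| := by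
  have key := Convex.norm_image_sub_le_of_norm_hasDerivWithin_le
    (f := logistic) (f' := fun x => Real.exp (-x) / (1 + Real.exp (-x)) ^ 2)
    (fun z _ => (hasDerivAt_logistic z).hasDerivWithinAt) (C := 1/4)
    (fun z _ => by
      rw [Real.norm_eq_abs, abs_of_nonneg (by positivity), div_le_iff₀ (by positivity)]
      nlinarith [Real.exp_pos (-z), sq_nonneg (1 - Real.exp (-z))])
    convex_univ (Set.mem_univ y) (Set.mem_univ x)
  simpa [Real.norm_eq_abs] using key

/-- key second-order bound -/
lemma log_one_add_exp_taylor (a b : ℝ) :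
    Real.log (1 + Real.exp b) - Real.log (1 + Real.exp a) - logistic a * (b - a)
      ≤ (a - b) ^ 2 := by
  have hd : ∀ z : ℝ, HasDerivAt (fun x => Real.log (1 + Real.exp x)) (logistic z) z := by
    intro z
    have h : HasDerivAt (fun x : ℝ => 1 + Real.exp x) (Real.exp z) z :=
      (Real.hasDerivAt_exp z).const_add 1
    have := h.log (by positivity)
    have heq : Real.exp z / (1 + Real.exp z) = logistic z := by
      rw [logistic, Real.exp_neg]
      field_simp
      ring
    rwa [heq] at this
  have key := Convex.norm_image_sub_le_of_norm_hasFDerivWithin_le'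
    (f := fun x => Real.log (1 + Real.exp x))
    (f' := fun z => ContinuousLinearMap.smulRight (1 : ℝ →L[ℝ] ℝ) (logistic z))
    (φ := ContinuousLinearMap.smulRight (1 : ℝ →L[ℝ] ℝ) (logistic a))
    (s := Set.uIcc a b) (C := (1/4) * |b - a|)
    (fun z _ => ((hd z).hasFDerivAt).hasFDerivWithinAt)
    (fun z hz => by
      beta_reduce
      have h1 : ContinuousLinearMap.smulRight (1 : ℝ →L[ℝ] ℝ) (logistic z) -
          ContinuousLinearMap.smulRight (1 : ℝ →L[ℝ] ℝ) (logistic a) =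
          ContinuousLinearMap.smulRight (1 : ℝ →L[ℝ] ℝ) (logistic z - logistic a) := by
        ext t; simp [mul_sub]
      rw [h1]
      have h2 : ‖ContinuousLinearMap.smulRight (1 : ℝ →L[ℝ] ℝ) (logistic z - logistic a)‖
          = ‖logistic z - logistic a‖ := by
        rw [ContinuousLinearMap.norm_smulRight_apply]; simp
      rw [h2, Real.norm_eq_abs]
      calc |logistic z - logistic a| ≤ (1/4) * |z - a| := logistic_lipschitz z a
        _ ≤ (1/4) * |b - a| := by
            have h4 : |z - a| ≤ |b - a| := by
              rcases le_total a b with h | h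
              · rw [Set.uIcc_of_le h] at hz
                rw [abs_of_nonneg (by linarith [hz.1]), abs_of_nonneg (by linarith)]
                linarith [hz.2]
              · rw [Set.uIcc_of_ge h] at hz
                rw [abs_of_nonpos (by linarith [hz.2]), abs_of_nonpos (by linarith)]
                linarith [hz.1]
            linarith
      )
    (convex_uIcc a b) Set.left_mem_uIcc Set.right_mem_uIcc
  have happ : (ContinuousLinearMap.smulRight (1 : ℝ →L[ℝ] ℝ) (logistic a)) (b - a)
      = logistic a * (b - a) := by simp [mul_comm]
  rw [happ, Real.norm_eq_abs, Real.norm_eq_abs] at key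
  have h3 : (1/4) * |b - a| * |b - a| ≤ (a - b)^2 := by
    rw [abs_sub_comm]
    nlinarith [sq_abs (a - b), abs_nonneg (a-b)]
  have := (le_abs_self _).trans key
  linarith

lemma log_logistic (x : ℝ) :
    Real.log (logistic x) = x - Real.log (1 + Real.exp x) := by
  have h : logistic x = Real.exp x / (1 + Real.exp x) := by
    rw [logistic, Real.exp_neg]
    field_simp
    ring
  rw [h, Real.log_div (Real.exp_ne_zero x) (one_add_exp_pos x).ne', Real.log_exp]

lemma log_one_sub_logistic (x : ℝ) :
    Real.log (1 - logistic x) = - Real.log (1 + Real.exp x) := by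
  have h : 1 - logistic x = (1 + Real.exp x)⁻¹ := by
    rw [logistic, Real.exp_neg]
    field_simp
    ring
  rw [h, Real.log_inv]

lemma bern_kl_le (a b : ℝ) :
    logistic a * Real.log (logistic a / logistic b)
      + (1 - logistic a) * Real.log ((1 - logistic a) / (1 - logistic b))
      ≤ (a - b) ^ 2 := by
  rw [Real.log_div (logistic_pos a).ne' (logistic_pos b).ne',
    Real.log_div (sub_pos.2 (logistic_lt_one a)).ne' (sub_pos.2 (logistic_lt_one b)).ne',
    log_logistic a, log_logistic b, log_one_sub_logistic a, log_one_sub_logistic b]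
  nlinarith [log_one_add_exp_taylor a b]



/-- KL bound for product Bernoulli likelihoods: with `P_a = ⊗_i Bernoulli(p_{a i})` and
`P_b = ⊗_i Bernoulli(p_{b i})`, `D_KL(P_a ‖ P_b) = ∫ log(dP_a/dP_b) dP_a ≤ Σ_i (aᵢ − bᵢ)²`. -/
theorem klDiv_product_bernoulli_le
    {ι : Type*} [Fintype ι] (a b : ι → ℝ) :
    ∫ y, Real.log (((Measure.pi fun i => bernoulliLogit (a i)).rnDeriv
          (Measure.pi fun i => bernoulliLogit (b i)) y).toReal)
        ∂(Measure.pi fun i => bernoulliLogit (a i))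
      ≤ ∑ i : ι, (a i - b i) ^ 2 := by
  classical
  set μa := Measure.pi fun i => bernoulliLogit (a i) with hμadef
  set μb := Measure.pi fun i => bernoulliLogit (b i) with hμbdef
  set wA : ι → Bool → ℝ := fun i t => if t then logistic (a i) else 1 - logistic (a i) with hwA
  set wB : ι → Bool → ℝ := fun i t => if t then logistic (b i) else 1 - logistic (b i) with hwB
  have hwApos : ∀ i t, 0 < wA i t := fun i t => by
    cases t <;> simp [hwA, logistic_pos, sub_pos, logistic_lt_one]
  have hwBpos : ∀ i t, 0 < wB i t := fun i t => by
    cases t <;> simp [hwB, logistic_pos, sub_pos, logistic_lt_one]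
  have hμa_single : ∀ y : ι → Bool, μa {y} = ENNReal.ofReal (∏ i, wA i (y i)) := by
    intro y
    rw [← Set.univ_pi_singleton y, hμadef, Measure.pi_pi,
      ENNReal.ofReal_prod_of_nonneg (fun i _ => (hwApos i (y i)).le)]
    exact Finset.prod_congr rfl fun i _ => bernoulliLogit_singleton _ _
  have hμb_single : ∀ y : ι → Bool, μb {y} = ENNReal.ofReal (∏ i, wB i (y i)) := by
    intro y
    rw [← Set.univ_pi_singleton y, hμbdef, Measure.pi_pi,
      ENNReal.ofReal_prod_of_nonneg (fun i _ => (hwBpos i (y i)).le)]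
    exact Finset.prod_congr rfl fun i _ => bernoulliLogit_singleton _ _
  set f : (ι → Bool) → ENNReal :=
    fun y => ENNReal.ofReal (∏ i, wA i (y i) / wB i (y i)) with hfdef
  have hf : Measurable f := measurable_of_countable f
  have hμa_dens : μa = μb.withDensity f := by
    refine Measure.ext_iff_singleton.mpr fun y => ?_
    rw [withDensity_apply _ (measurableSet_singleton y), lintegral_singleton,
      hμa_single, hμb_single, hfdef]
    rw [← ENNReal.ofReal_mul (Finset.prod_nonneg fun i _ => (div_pos (hwApos i (y i)) (hwBpos i (y i))).le)]
    congr 1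
    rw [Finset.prod_div_distrib, div_mul_cancel₀]
    exact (Finset.prod_pos fun i _ => hwBpos i (y i)).ne'
  have hac : μa ≪ μb := by
    rw [hμa_dens]; exact withDensity_absolutelyContinuous μb f
  have haeb : μa.rnDeriv μb =ᵐ[μb] f := by
    conv_lhs => rw [hμa_dens]
    exact Measure.rnDeriv_withDensity μb hf
  have hae : μa.rnDeriv μb =ᵐ[μa] f := haeb.filter_mono hac.ae_le
  have hint : ∫ y, Real.log ((μa.rnDeriv μb y).toReal) ∂μa
      = ∫ y, (∑ j, Real.log (wA j (y j) / wB j (y j))) ∂μa := by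
    refine integral_congr_ae ?_
    filter_upwards [hae] with y hy
    rw [hy, hfdef]
    rw [ENNReal.toReal_ofReal (Finset.prod_nonneg fun i _ => (div_pos (hwApos i (y i)) (hwBpos i (y i))).le)]
    exact Real.log_prod fun i _ => (div_pos (hwApos i (y i)) (hwBpos i (y i))).ne'
  rw [hint, integral_fintype (.of_finite)]
  simp only [Measure.real_def]
  have hS : ∀ y : ι → Bool, (μa {y}).toReal = ∏ i, wA i (y i) := fun y => by
    rw [hμa_single, ENNReal.toReal_ofReal (Finset.prod_nonneg fun i _ => (hwApos i (y i)).le)]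
  set g : ι → ι → Bool → ℝ :=
    fun j i t => wA i t * (if i = j then Real.log (wA i t / wB i t) else 1) with hg
  have step1 : ∑ y : ι → Bool, (μa {y}).toReal • (∑ j, Real.log (wA j (y j) / wB j (y j)))
      = ∑ j, ∑ y : ι → Bool, ∏ i, g j i (y i) := by
    simp_rw [hS, smul_eq_mul, Finset.mul_sum]
    rw [Finset.sum_comm]
    refine Finset.sum_congr rfl fun j _ => Finset.sum_congr rfl fun y _ => ?_
    rw [hg]
    simp only []
    rw [Finset.prod_mul_distrib, Finset.prod_ite_eq' Finset.univ j
      (fun i => Real.log (wA i (y i) / wB i (y i)))]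
    simp
  have step2 : ∀ j, ∑ y : ι → Bool, ∏ i, g j i (y i) = ∏ i, ∑ t, g j i t := by
    intro j
    rw [Finset.prod_univ_sum, Fintype.piFinset_univ]
  have step3 : ∀ j, ∏ i, ∑ t, g j i t
      = logistic (a j) * Real.log (logistic (a j) / logistic (b j))
        + (1 - logistic (a j)) * Real.log ((1 - logistic (a j)) / (1 - logistic (b j))) := by
    intro j
    rw [Finset.prod_eq_single j
      (fun i _ hij => by
        rw [Fintype.sum_bool]
        simp [hg, hwA, hij])
      (fun h => absurd (Finset.mem_univ j) h)]
    rw [Fintype.sum_bool]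
    simp [hg, hwA, hwB]
  rw [step1]
  refine Finset.sum_le_sum fun j _ => ?_
  rw [step2 j, step3 j]
  exact bern_kl_le (a j) (b j)
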